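/- Let $N \ge 1$, let $I_d \subseteq \{1,\dots,N\}$ be a nonempty set of indices, let $L_1, \dots, L_N > 0$ and let $k_1, \dots, k_N$ be nonzero real numbers with $\sum_{l \in I_d} k_l / L_l \ne 0$. Then for every tuple of continuous functions $f_j : [0,L_j] \to \mathbb{R}$ there exists a unique tuple $(\psi_1,\dots,\psi_N)$ of twice continuously differentiable functions $\psi_j : [0,L_j] \to \mathbb{R}$ satisfying: $-k_j \psi_j'' = f_j$ on $[0,L_j]$ for all $j$; $\psi_j(0) = 0$ for $j \in I_d$; $\psi_j'(0) = 0$ for $j \notin I_d$; $\psi_l(L_l) = \psi_m(L_m)$ for all $1 \le l, m \le N$; and $\sum_{l=1}^{N} k_l \psi_l'(L_l) = 0$. -/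

import Mathlib

private lemma tietze_ext {a b : ℝ} {f : ℝ → ℝ} (hf : ContinuousOn f (Set.Icc a b)) :
    ∃ g : ℝ → ℝ, Continuous g ∧ Set.EqOn g f (Set.Icc a b) := by
  obtain ⟨g, hg⟩ := ContinuousMap.exists_restrict_eq (Y := ℝ) (isClosed_Icc)
    ⟨_, hf.restrict⟩
  refine ⟨g, g.continuous, fun x hx => ?_⟩
  have := congrFun (congrArg ContinuousMap.toFun hg) ⟨x, hx⟩
  simpa using this

private lemma contDiff_two_of {f f' f'' : ℝ → ℝ} (h1 : ∀ x, HasDerivAt f (f' x) x)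
    (h2 : ∀ x, HasDerivAt f' (f'' x) x) (hc : Continuous f'') : ContDiff ℝ 2 f := by
  have hd : deriv f = f' := funext fun x => (h1 x).deriv
  have hd' : deriv f' = f'' := funext fun x => (h2 x).deriv
  rw [show (2 : WithTop ℕ∞) = 1 + 1 from rfl, contDiff_succ_iff_deriv]
  refine ⟨fun x => (h1 x).differentiableAt, by simp, ?_⟩
  rw [hd, contDiff_one_iff_deriv, hd']
  exact ⟨fun x => (h2 x).differentiableAt, hc⟩

private lemma derivWithin_eq_of {a b : ℝ} (hab : a < b) {f f' : ℝ → ℝ}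
    (h1 : ∀ x, HasDerivAt f (f' x) x) {x : ℝ} (hx : x ∈ Set.Icc a b) :
    derivWithin f (Set.Icc a b) x = f' x := by
  rw [(h1 x).differentiableAt.derivWithin ((uniqueDiffOn_Icc hab) x hx)]
  exact (h1 x).deriv

private lemma iter2_eq_of {a b : ℝ} (hab : a < b) {f f' f'' : ℝ → ℝ}
    (h1 : ∀ x, HasDerivAt f (f' x) x) (h2 : ∀ x, HasDerivAt f' (f'' x) x)
    {x : ℝ} (hx : x ∈ Set.Icc a b) :
    iteratedDerivWithin 2 f (Set.Icc a b) x = f'' x := by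
  have hs := uniqueDiffOn_Icc hab
  rw [show (2 : ℕ) = 1 + 1 from rfl, iteratedDerivWithin_succ]
  have heq : Set.EqOn (iteratedDerivWithin 1 f (Set.Icc a b)) f' (Set.Icc a b) := by
    intro y hy
    rw [iteratedDerivWithin_one]
    exact derivWithin_eq_of hab h1 hy
  rw [derivWithin_congr heq (heq hx)]
  exact derivWithin_eq_of hab h2 hx

private lemma edge_repr {Lj : ℝ} (hLj : 0 < Lj) {φ h G H : ℝ → ℝ}
    (hG : ∀ x, HasDerivAt G (h x) x) (hH : ∀ x, HasDerivAt H (G x) x)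
    (hG0 : G 0 = 0) (hH0 : H 0 = 0)
    (hφ : ContDiffOn ℝ 2 φ (Set.Icc 0 Lj))
    (h2 : ∀ x ∈ Set.Icc 0 Lj, iteratedDerivWithin 2 φ (Set.Icc 0 Lj) x = h x) :
    (∀ x ∈ Set.Icc 0 Lj, derivWithin φ (Set.Icc 0 Lj) x
        = derivWithin φ (Set.Icc 0 Lj) 0 + G x) ∧
    (∀ x ∈ Set.Icc 0 Lj, φ x = φ 0 + derivWithin φ (Set.Icc 0 Lj) 0 * x + H x) := by
  set s := Set.Icc (0:ℝ) Lj with hs_def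
  have hs : UniqueDiffOn ℝ s := uniqueDiffOn_Icc hLj
  have h0s : (0:ℝ) ∈ s := Set.left_mem_Icc.2 hLj.le
  set u := derivWithin φ s with hu_def
  have hu_diff : DifferentiableOn ℝ u s :=
    (hφ.derivWithin (m := 1) hs (by norm_num)).differentiableOn (by norm_num)
  have hu_deriv : ∀ x ∈ s, derivWithin u s x = h x := by
    intro x hx
    have := h2 x hx
    rwa [show (2:ℕ) = 1 + 1 from rfl, iteratedDerivWithin_succ,
      derivWithin_congr (fun y hy => congrFun iteratedDerivWithin_one y)
        (congrFun iteratedDerivWithin_one x)] at this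
  have step1 : ∀ x ∈ s, u x = u 0 + G x := by
    have hvdiff : DifferentiableOn ℝ (fun x => u x - G x) s :=
      hu_diff.sub (fun x hx => (hG x).differentiableAt.differentiableWithinAt)
    have hvzero : ∀ x ∈ Set.Ico (0:ℝ) Lj, derivWithin (fun x => u x - G x) s x = 0 := by
      intro x hx
      have hxs : x ∈ s := Set.Ico_subset_Icc_self hx
      rw [derivWithin_fun_sub (hu_diff x hxs)
        (hG x).differentiableAt.differentiableWithinAt,
        hu_deriv x hxs, (hG x).differentiableAt.derivWithin (hs x hxs), (hG x).deriv, sub_self]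
    intro x hx
    have := constant_of_derivWithin_zero hvdiff hvzero x hx
    simp only [hG0, sub_zero] at this
    linarith
  refine ⟨step1, ?_⟩
  have hφdiff : DifferentiableOn ℝ φ s := hφ.differentiableOn (by norm_num)
  have hwdiff : DifferentiableOn ℝ (fun x => φ x - (u 0 * x + H x)) s :=
    hφdiff.sub (fun x hx =>
      ((differentiableAt_id.const_mul _).add (hH x).differentiableAt).differentiableWithinAt)
  have hwzero : ∀ x ∈ Set.Ico (0:ℝ) Lj,
      derivWithin (fun x => φ x - (u 0 * x + H x)) s x = 0 := by
    intro x hx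
    have hxs : x ∈ s := Set.Ico_subset_Icc_self hx
    have hlin : HasDerivAt (fun x => u 0 * x + H x) (u 0 + G x) x :=
      ((hasDerivAt_id x).const_mul (u 0)).add (hH x) |>.congr_deriv (by ring)
    rw [derivWithin_fun_sub (hφdiff x hxs) hlin.differentiableAt.differentiableWithinAt,
      hlin.differentiableAt.derivWithin (hs x hxs), hlin.deriv, ← hu_def, step1 x hxs, sub_self]
  intro x hx
  have := constant_of_derivWithin_zero hwdiff hwzero x hx
  simp only [hH0, mul_zero, add_zero, sub_zero] at this
  linarith

private lemma kirchhoff_eval (N : ℕ) (Id : Finset ℕ) (hId : Id ⊆ Finset.Icc 1 N)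
    (k L Hv Gv : ℕ → ℝ) (hL : ∀ j ∈ Finset.Icc 1 N, 0 < L j) (c : ℝ) (b : ℕ → ℝ)
    (hb : ∀ j ∈ Finset.Icc 1 N, b j = if j ∈ Id then (c - Hv j) / L j else 0) :
    ∑ l ∈ Finset.Icc 1 N, k l * (b l + Gv l)
      = c * (∑ l ∈ Id, k l / L l) - (∑ l ∈ Id, k l * Hv l / L l)
        + ∑ l ∈ Finset.Icc 1 N, k l * Gv l := by
  have h1 : ∑ l ∈ Finset.Icc 1 N, k l * (b l + Gv l)
      = ∑ l ∈ Finset.Icc 1 N, k l * b l + ∑ l ∈ Finset.Icc 1 N, k l * Gv l := by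
    rw [← Finset.sum_add_distrib]; exact Finset.sum_congr rfl fun l _ => by ring
  rw [h1]
  have h2 : ∑ l ∈ Finset.Icc 1 N, k l * b l = ∑ l ∈ Id, k l * b l :=
    (Finset.sum_subset hId (fun j hj hnj => by rw [hb j hj, if_neg hnj, mul_zero])).symm
  have h3 : ∑ l ∈ Id, k l * b l = ∑ l ∈ Id, (c * (k l / L l) - k l * Hv l / L l) := by
    refine Finset.sum_congr rfl fun l hl => ?_
    have hLl : L l ≠ 0 := (hL l (hId hl)).ne'
    rw [hb l (hId hl), if_pos hl]
    field_simp
  rw [h2, h3, Finset.sum_sub_distrib, ← Finset.mul_sum]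

/-- Classical solution of the general mixed star-network problem on `N` edges, edge `j` of
length `L j` with conductivity `k j`: Dirichlet condition `ψ j 0 = 0` for `j ∈ Id`,
Neumann condition `ψ j ' 0 = 0` for the other edges, continuity and Kirchhoff conditions
at the internal vertex (`x = L j` on edge `j`). -/
def IsGeneralMixedStarSolution (N : ℕ) (Id : Finset ℕ) (L : ℕ → ℝ) (k : ℕ → ℝ)
    (f : ℕ → ℝ → ℝ) (ψ : ℕ → ℝ → ℝ) : Prop :=
  (∀ j ∈ Finset.Icc 1 N, ContDiffOn ℝ 2 (ψ j) (Set.Icc 0 (L j))) ∧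
  (∀ j ∈ Finset.Icc 1 N, ∀ x ∈ Set.Icc 0 (L j),
      -(k j * iteratedDerivWithin 2 (ψ j) (Set.Icc 0 (L j)) x) = f j x) ∧
  (∀ j ∈ Finset.Icc 1 N, j ∈ Id → ψ j 0 = 0) ∧
  (∀ j ∈ Finset.Icc 1 N, j ∉ Id → derivWithin (ψ j) (Set.Icc 0 (L j)) 0 = 0) ∧
  (∀ l ∈ Finset.Icc 1 N, ∀ m ∈ Finset.Icc 1 N, ψ l (L l) = ψ m (L m)) ∧
  (∑ l ∈ Finset.Icc 1 N, k l * derivWithin (ψ l) (Set.Icc 0 (L l)) (L l) = 0)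

/-- Well-posedness for a general star network with mixed boundary conditions
(Corollary 3.2): `Id` is the set of edges carrying a Dirichlet condition at their
external vertex, and the problem is well-posed provided `∑_{l ∈ Id} k l / L l ≠ 0`. -/
theorem stmt_7 (N : ℕ) (hN : 1 ≤ N) (Id : Finset ℕ) (hId : Id ⊆ Finset.Icc 1 N)
    (hIdne : Id.Nonempty)
    (L : ℕ → ℝ) (hL : ∀ j ∈ Finset.Icc 1 N, 0 < L j)
    (k : ℕ → ℝ) (hk : ∀ j ∈ Finset.Icc 1 N, k j ≠ 0)
    (hres : ∑ l ∈ Id, k l / L l ≠ 0)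
    (f : ℕ → ℝ → ℝ) (hf : ∀ j ∈ Finset.Icc 1 N, ContinuousOn (f j) (Set.Icc 0 (L j))) :
    ∃ ψ : ℕ → ℝ → ℝ, IsGeneralMixedStarSolution N Id L k f ψ ∧
      ∀ φ : ℕ → ℝ → ℝ, IsGeneralMixedStarSolution N Id L k f φ →
        ∀ j ∈ Finset.Icc 1 N, ∀ x ∈ Set.Icc (0 : ℝ) (L j), φ j x = ψ j x := by
  classical
  -- continuous extensions of the data
  have hext : ∀ j, ∃ g : ℝ → ℝ, Continuous g ∧
      (j ∈ Finset.Icc 1 N → Set.EqOn g (f j) (Set.Icc 0 (L j))) := by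
    intro j
    by_cases hj : j ∈ Finset.Icc 1 N
    · obtain ⟨g, hgc, hge⟩ := tietze_ext (hf j hj)
      exact ⟨g, hgc, fun _ => hge⟩
    · exact ⟨fun _ => 0, continuous_const, fun h => absurd h hj⟩
  choose g hgc hge using hext
  set h : ℕ → ℝ → ℝ := fun j x => -(g j x) / k j with hh_def
  have hhc : ∀ j, Continuous (h j) := fun j => ((hgc j).neg).div_const _
  set G : ℕ → ℝ → ℝ := fun j x => ∫ t in (0:ℝ)..x, h j t with hG_def
  have hGd : ∀ j x, HasDerivAt (G j) (h j x) x := fun j x =>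
    ((hhc j).integral_hasStrictDerivAt 0 x).hasDerivAt
  have hGc : ∀ j, Continuous (G j) := fun j =>
    Differentiable.continuous fun x => (hGd j x).differentiableAt
  set H : ℕ → ℝ → ℝ := fun j x => ∫ t in (0:ℝ)..x, G j t with hH_def
  have hHd : ∀ j x, HasDerivAt (H j) (G j x) x := fun j x =>
    ((hGc j).integral_hasStrictDerivAt 0 x).hasDerivAt
  have hG0 : ∀ j, G j 0 = 0 := fun j => intervalIntegral.integral_same
  have hH0 : ∀ j, H j 0 = 0 := fun j => intervalIntegral.integral_same
  set D := ∑ l ∈ Id, k l / L l with hD_def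
  set c : ℝ := ((∑ l ∈ Id, k l * H l (L l) / L l)
      - ∑ l ∈ Finset.Icc 1 N, k l * G l (L l)) / D with hc_def
  set A : ℕ → ℝ := fun j => if j ∈ Id then 0 else c - H j (L j) with hA_def
  set B : ℕ → ℝ := fun j => if j ∈ Id then (c - H j (L j)) / L j else 0 with hB_def
  set ψ : ℕ → ℝ → ℝ := fun j x => A j + B j * x + H j x with hψ_def
  have hψd : ∀ j x, HasDerivAt (ψ j) (B j + G j x) x := fun j x =>
    (((hasDerivAt_const x (A j)).add ((hasDerivAt_id x).const_mul (B j))).add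
      (hHd j x)).congr_deriv (by ring)
  have hψd2 : ∀ j x, HasDerivAt (fun x => B j + G j x) (h j x) x := fun j x =>
    ((hasDerivAt_const x (B j)).add (hGd j x)).congr_deriv (zero_add _)
  -- the PDE right-hand side
  have hpde : ∀ j ∈ Finset.Icc 1 N, ∀ x ∈ Set.Icc 0 (L j), -(k j * h j x) = f j x := by
    intro j hj x hx
    have hkj := hk j hj
    have : -(k j * h j x) = g j x := by
      simp only [hh_def]
      field_simp
    rw [this]
    exact hge j hj hx
  -- values of ψ at the internal vertex
  have hψL : ∀ j ∈ Finset.Icc 1 N, ψ j (L j) = c := by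
    intro j hj
    have hLj : L j ≠ 0 := (hL j hj).ne'
    by_cases hjd : j ∈ Id
    · simp only [hψ_def, hA_def, hB_def, if_pos hjd]
      field_simp
      ring
    · simp only [hψ_def, hA_def, hB_def, if_neg hjd]
      ring
  have hBdef : ∀ j ∈ Finset.Icc 1 N, B j
      = if j ∈ Id then (c - H j (L j)) / L j else 0 := fun j _ => rfl
  have hcD : c * D = (∑ l ∈ Id, k l * H l (L l) / L l)
      - ∑ l ∈ Finset.Icc 1 N, k l * G l (L l) := by
    rw [hc_def]; field_simp
  refine ⟨ψ, ⟨?_, ?_, ?_, ?_, ?_, ?_⟩, ?_⟩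
  · -- smoothness
    intro j hj
    exact (contDiff_two_of (hψd j) (hψd2 j) (hhc j)).contDiffOn
  · -- the equation
    intro j hj x hx
    rw [iter2_eq_of (hL j hj) (hψd j) (hψd2 j) hx]
    exact hpde j hj x hx
  · -- Dirichlet
    intro j hj hjd
    simp only [hψ_def, hA_def, if_pos hjd, hH0 j]
    ring
  · -- Neumann
    intro j hj hjd
    have h0 : (0:ℝ) ∈ Set.Icc 0 (L j) := Set.left_mem_Icc.2 (hL j hj).le
    rw [derivWithin_eq_of (hL j hj) (hψd j) h0, hG0 j]
    simp only [hB_def, if_neg hjd]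
    ring
  · -- continuity at the vertex
    intro l hl m hm
    rw [hψL l hl, hψL m hm]
  · -- Kirchhoff
    have : ∀ l ∈ Finset.Icc 1 N, k l * derivWithin (ψ l) (Set.Icc 0 (L l)) (L l)
        = k l * (B l + G l (L l)) := by
      intro l hl
      rw [derivWithin_eq_of (hL l hl) (hψd l) (Set.right_mem_Icc.2 (hL l hl).le)]
    rw [Finset.sum_congr rfl this,
      kirchhoff_eval N Id hId k L (fun l => H l (L l)) (fun l => G l (L l)) hL c B hBdef,
      hcD]
    ring
  · -- uniqueness
    rintro φ ⟨hφC, hφE, hφD, hφN, hφcont, hφK⟩ j hj x hx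
    -- each edge representation
    have hrep : ∀ j ∈ Finset.Icc 1 N,
        (∀ x ∈ Set.Icc 0 (L j), derivWithin (φ j) (Set.Icc 0 (L j)) x
            = derivWithin (φ j) (Set.Icc 0 (L j)) 0 + G j x) ∧
        (∀ x ∈ Set.Icc 0 (L j), φ j x
            = φ j 0 + derivWithin (φ j) (Set.Icc 0 (L j)) 0 * x + H j x) := by
      intro j hj
      refine edge_repr (hL j hj) (hGd j) (hHd j) (hG0 j) (hH0 j) (hφC j hj) ?_
      intro x hx
      have h1 := hφE j hj x hx
      have h2 := hpde j hj x hx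
      have hkj := hk j hj
      have := h1.trans h2.symm
      exact mul_left_cancel₀ hkj (neg_injective this)
    set b : ℕ → ℝ := fun j => derivWithin (φ j) (Set.Icc 0 (L j)) 0 with hb_def
    obtain ⟨j₀, hj₀Id⟩ := hIdne
    have hj₀ : j₀ ∈ Finset.Icc 1 N := hId hj₀Id
    set c' : ℝ := φ j₀ (L j₀) with hc'_def
    have hφLc : ∀ j ∈ Finset.Icc 1 N, φ j (L j) = c' := fun j hj => hφcont j hj j₀ hj₀
    have hbval : ∀ j ∈ Finset.Icc 1 N, b j
        = if j ∈ Id then (c' - H j (L j)) / L j else 0 := by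
      intro j hj
      have hLmem : L j ∈ Set.Icc 0 (L j) := Set.right_mem_Icc.2 (hL j hj).le
      have hval := (hrep j hj).2 (L j) hLmem
      rw [hφLc j hj] at hval
      by_cases hjd : j ∈ Id
      · rw [if_pos hjd]
        have h0 : φ j 0 = 0 := hφD j hj hjd
        rw [h0, zero_add] at hval
        have hLj : L j ≠ 0 := (hL j hj).ne'
        field_simp [hb_def]
        linarith [hval]
      · rw [if_neg hjd]
        exact hφN j hj hjd
    -- Kirchhoff gives c' = c
    have hKsum : ∑ l ∈ Finset.Icc 1 N, k l * (b l + G l (L l)) = 0 := by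
      rw [← hφK]
      refine Finset.sum_congr rfl fun l hl => ?_
      rw [(hrep l hl).1 (L l) (Set.right_mem_Icc.2 (hL l hl).le)]
    rw [kirchhoff_eval N Id hId k L (fun l => H l (L l)) (fun l => G l (L l)) hL c' b hbval]
      at hKsum
    have hc'c : c' = c := by
      have hD : c' * D = (∑ l ∈ Id, k l * H l (L l) / L l)
          - ∑ l ∈ Finset.Icc 1 N, k l * G l (L l) := by linarith [hKsum]
      have := hD.trans hcD.symm
      exact mul_right_cancel₀ hres this
    -- conclude
    have hval := (hrep j hj).2 x hx
    have hLmem : L j ∈ Set.Icc 0 (L j) := Set.right_mem_Icc.2 (hL j hj).le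
    have hvL := (hrep j hj).2 (L j) hLmem
    rw [hφLc j hj] at hvL
    have hbj : derivWithin (φ j) (Set.Icc 0 (L j)) 0
        = if j ∈ Id then (c' - H j (L j)) / L j else 0 := hbval j hj
    show φ j x = A j + B j * x + H j x
    by_cases hjd : j ∈ Id
    · have h0 : φ j 0 = 0 := hφD j hj hjd
      rw [if_pos hjd] at hbj
      simp only [hA_def, hB_def, if_pos hjd]
      rw [hval, h0, hbj, hc'c]
    · rw [if_neg hjd] at hbj
      have h0 : φ j 0 = c' - H j (L j) := by
        rw [hbj, zero_mul, add_zero] at hvL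
        linarith [hvL]
      simp only [hA_def, hB_def, if_neg hjd]
      rw [hval, h0, hbj, hc'c]
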